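/- Let K be a finite field, m ≥ 1, and H = H_m(K). A subgroup N of H is normal in H if and only if N ≤ [H,H] or [H,H] ≤ N. -/

import Mathlib

set_option linter.unusedSectionVars false

/-- The generalized Heisenberg group `H_m(K)`: underlying set `K^m × K^m × K` with
multiplication `(u,v,s)·(u',v',s') = (u+u', v+v', s+s'+u·v')`. -/
structure Heisenberg (K : Type*) (m : ℕ) where
  x : Fin m → K
  y : Fin m → K
  z : K

namespace Heisenberg

variable {K : Type*} [Field K] {m : ℕ}

@[ext] lemma ext' {a b : Heisenberg K m} (hx : a.x = b.x) (hy : a.y = b.y) (hz : a.z = b.z) :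
    a = b := by cases a; cases b; simp_all

instance : Mul (Heisenberg K m) :=
  ⟨fun a b => ⟨a.x + b.x, a.y + b.y, a.z + b.z + dotProduct a.x b.y⟩⟩

instance : One (Heisenberg K m) := ⟨⟨0, 0, 0⟩⟩

instance : Inv (Heisenberg K m) :=
  ⟨fun a => ⟨-a.x, -a.y, -a.z + dotProduct a.x a.y⟩⟩

@[simp] lemma mul_x (a b : Heisenberg K m) : (a * b).x = a.x + b.x := rfl
@[simp] lemma mul_y (a b : Heisenberg K m) : (a * b).y = a.y + b.y := rfl
@[simp] lemma mul_z (a b : Heisenberg K m) :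
    (a * b).z = a.z + b.z + dotProduct a.x b.y := rfl
@[simp] lemma one_x : (1 : Heisenberg K m).x = 0 := rfl
@[simp] lemma one_y : (1 : Heisenberg K m).y = 0 := rfl
@[simp] lemma one_z : (1 : Heisenberg K m).z = 0 := rfl
@[simp] lemma inv_x (a : Heisenberg K m) : a⁻¹.x = -a.x := rfl
@[simp] lemma inv_y (a : Heisenberg K m) : a⁻¹.y = -a.y := rfl
@[simp] lemma inv_z (a : Heisenberg K m) : a⁻¹.z = -a.z + dotProduct a.x a.y := rfl

instance instGroup : Group (Heisenberg K m) where
  mul_assoc a b c := by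
    ext <;> simp [add_dotProduct, dotProduct_add] <;> ring
  one_mul a := by ext <;> simp
  mul_one a := by ext <;> simp
  inv_mul_cancel a := by
    ext <;> simp [neg_dotProduct]

end Heisenberg

open scoped commutatorElement

namespace Heisenberg

variable {K : Type*} [Field K] {m : ℕ}

lemma comm_eq (g n : Heisenberg K m) :
    ⁅g, n⁆ = ⟨0, 0, dotProduct g.x n.y - dotProduct n.x g.y⟩ := by
  ext <;>
    simp [commutatorElement_def, add_dotProduct, dotProduct_add,
      neg_dotProduct, dotProduct_neg] <;> ring

lemma mem_commutator_iff (hm : 1 ≤ m) (a : Heisenberg K m) :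
    a ∈ commutator (Heisenberg K m) ↔ a.x = 0 ∧ a.y = 0 := by
  constructor
  · intro ha
    have hle : commutator (Heisenberg K m) ≤
        { carrier := {b | b.x = 0 ∧ b.y = 0}
          mul_mem' := by rintro b c ⟨hb1, hb2⟩ ⟨hc1, hc2⟩; simp_all
          one_mem' := by simp
          inv_mem' := by rintro b ⟨hb1, hb2⟩; simp_all } := by
      rw [commutator_def]
      rw [Subgroup.commutator_le]
      intro g _ n _
      rw [comm_eq]
      exact ⟨rfl, rfl⟩
    exact hle ha
  · rintro ⟨h1, h2⟩
    set i : Fin m := ⟨0, hm⟩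
    have : a = ⁅(⟨Pi.single i 1, 0, 0⟩ : Heisenberg K m), ⟨0, Pi.single i a.z, 0⟩⁆ := by
      rw [comm_eq]
      ext <;> simp [h1, h2, dotProduct_single, single_dotProduct]
    rw [this, commutator_def]
    exact Subgroup.commutator_mem_commutator (Subgroup.mem_top _) (Subgroup.mem_top _)

end Heisenberg

/-- For a finite field `K`, `m ≥ 1`, and `H = H_m(K)`, a subgroup `N ≤ H`
is normal if and only if `N ≤ [H,H]` or `[H,H] ≤ N`. -/
theorem heisenberg_normal_iff
    (K : Type) [Field K] [Fintype K] (m : ℕ) (hm : 1 ≤ m)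
    (N : Subgroup (Heisenberg K m)) :
    N.Normal ↔ N ≤ commutator (Heisenberg K m) ∨ commutator (Heisenberg K m) ≤ N := by
  constructor
  · intro hN
    by_cases hle : N ≤ commutator (Heisenberg K m)
    · exact Or.inl hle
    · right
      obtain ⟨n, hnN, hn⟩ := SetLike.not_le_iff_exists.mp hle
      rw [Heisenberg.mem_commutator_iff hm] at hn
      intro a ha
      rw [Heisenberg.mem_commutator_iff hm] at ha
      obtain ⟨h1, h2⟩ := ha
      -- find g with ⁅g, n⁆ = a
      have key : ∀ g : Heisenberg K m,
          dotProduct g.x n.y - dotProduct n.x g.y = a.z → a ∈ N := by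
        intro g hg
        have ha' : a = ⁅g, n⁆ := by
          rw [Heisenberg.comm_eq]; ext <;> simp [h1, h2, hg]
        rw [ha', commutatorElement_def]
        exact mul_mem (hN.conj_mem n hnN g) (inv_mem hnN)
      rcases not_and_or.mp hn with hx | hy
      · obtain ⟨j, hj⟩ := Function.ne_iff.mp hx
        simp only [Pi.zero_apply] at hj
        refine key ⟨0, Pi.single j (-a.z / n.x j), 0⟩ ?_
        simp [dotProduct_single, zero_dotProduct]
        field_simp
      · obtain ⟨j, hj⟩ := Function.ne_iff.mp hy
        simp only [Pi.zero_apply] at hj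
        refine key ⟨Pi.single j (a.z / n.y j), 0, 0⟩ ?_
        simp [single_dotProduct, dotProduct_zero]
        field_simp
  · rintro (hle | hle)
    · constructor
      intro n hn g
      have hn' := hle hn
      rw [Heisenberg.mem_commutator_iff hm] at hn'
      obtain ⟨h1, h2⟩ := hn'
      have : g * n * g⁻¹ = n := by
        ext <;> simp [h1, h2, dotProduct_add, dotProduct_neg,
          add_dotProduct, neg_dotProduct] <;> ring
      rw [this]; exact hn
    · constructor
      intro n hn g
      have hc : ⁅g, n⁆ ∈ N := by
        apply hle
        rw [commutator_def]
        exact Subgroup.commutator_mem_commutator (Subgroup.mem_top _) (Subgroup.mem_top _)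
      have : g * n * g⁻¹ = ⁅g, n⁆ * n := by group
      rw [this]
      exact mul_mem hc hn
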